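/- Let K and L be finite fields such that L is a field extension of K of degree m + 1 (m ≥ 1), viewed as a K-vector space. For a unit g ∈ Lˣ and a nonzero element x ∈ L, the map of the projectivization P(L) induced by multiplication by g fixes the point [x] determined by x if and only if g lies in the image of Kˣ under the algebra map. Consequently, the cyclic quotient Lˣ⧸Kˣ acts simply transitively (regularly) on the points of P^m(F_n). -/

import Mathlib

open scoped LinearAlgebra.Projectivization

private lemma aux_map {K L : Type*} [Field K] [Field L] [Algebra K L] (g : Lˣ)
    (hinj : Function.Injective (LinearMap.mulLeft K (g : L))) (x : ℙ K L) :
    Projectivization.map (LinearMap.mulLeft K (g : L)) hinj x =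
      Projectivization.mk K ((g : L) * x.rep) (mul_ne_zero g.ne_zero x.rep_nonzero) := by
  conv_lhs => rw [← x.mk_rep]
  rw [Projectivization.map_mk]
  rfl

/-- Multiplication by a unit `g ∈ Lˣ` fixes the projective point `[x]` iff `g` comes
from `Kˣ`; consequently the Singer group `Lˣ ⧸ Kˣ` acts simply transitively (regularly)
on the points of the projective space `ℙ K L ≅ ℙ^m(𝔽_n)`. -/
theorem stmt_2 (K L : Type*) [Field K] [Field L] [Fintype K] [Fintype L]
    [Algebra K L] (m : ℕ) (hm : 1 ≤ m) (hd : Module.finrank K L = m + 1) :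
    (∀ (g : Lˣ) (x : L) (hx : x ≠ 0),
      Projectivization.map (LinearMap.mulLeft K (g : L))
          (fun a b hab => by
            simpa using mul_left_cancel₀ (Units.ne_zero g) (by simpa using hab))
          (Projectivization.mk K x hx) = Projectivization.mk K x hx ↔
        ∃ k : Kˣ, algebraMap K L (k : K) = (g : L)) ∧
    (∀ x y : ℙ K L, ∃ g : Lˣ,
      Projectivization.map (LinearMap.mulLeft K (g : L))
          (fun a b hab => by
            simpa using mul_left_cancel₀ (Units.ne_zero g) (by simpa using hab)) x = y ∧
      ∀ g' : Lˣ,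
        Projectivization.map (LinearMap.mulLeft K (g' : L))
            (fun a b hab => by
              simpa using mul_left_cancel₀ (Units.ne_zero g') (by simpa using hab)) x = y →
          g' * g⁻¹ ∈ (Units.map (algebraMap K L).toMonoidHom).range) := by
  constructor
  · intro g x hx
    erw [Projectivization.map_mk]; rw [Projectivization.mk_eq_mk_iff]
    simp only [LinearMap.mulLeft_apply]
    constructor
    · rintro ⟨k, hk⟩
      rw [Units.smul_def, Algebra.smul_def] at hk
      exact ⟨k, mul_right_cancel₀ hx hk⟩
    · rintro ⟨k, hk⟩
      refine ⟨k, ?_⟩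
      rw [Units.smul_def, Algebra.smul_def, hk]
  · intro x y
    have hx := x.rep_nonzero
    have hy := y.rep_nonzero
    refine ⟨Units.mk0 (y.rep / x.rep) (div_ne_zero hy hx), ?_, ?_⟩
    · erw [aux_map]
      simp only [Units.val_mk0, div_mul_cancel₀ _ hx]
      exact y.mk_rep
    · intro g' hg'
      erw [aux_map] at hg'; rw [← y.mk_rep, Projectivization.mk_eq_mk_iff] at hg'
      obtain ⟨k, hk⟩ := hg'
      rw [Units.smul_def, Algebra.smul_def] at hk
      refine ⟨k, Units.ext ?_⟩
      simp only [Units.val_mul, Units.coe_map, RingHom.toMonoidHom_eq_coe,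
        MonoidHom.coe_coe, Units.val_inv_eq_inv_val, Units.val_mk0]
      field_simp
      linear_combination hk
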